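/- arXiv:2303.04434 — 4 statements merged into one kernel-verified Lean document; each statement's English description precedes it below -/
import Mathlib

section
/- Let α ∈ [1/2, 1/(2(1−a²))] and β > 0, and suppose f_d(0,α,β) ≤ f_s(0,α). Then f_d(u,α,β) < f_s(u,α) for all u ∈ (0,1). -/
noncomputable section

open Real Set

/-- A vector in Euclidean 3-space. -/
def v3 (x y z : ℝ) : EuclideanSpace ℝ (Fin 3) := !₂[x, y, z]

/-- Quadratic Bernstein polynomials (parametrized on `[-1,1]`). -/
def bern (i : Fin 3) (u : ℝ) : ℝ :=
  (Nat.choose 2 (i : ℕ)) * ((1 + u) / 2) ^ (i : ℕ) * ((1 - u) / 2) ^ (2 - (i : ℕ))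

/-- Control points `ctrl a α β i j = b i j` of the tensor product quadratic Bézier patch:
`b₀₀ = (-a,-a,√(1-2a²))`, `b₂₀ = (a,-a,√(1-2a²))`, `b₀₂ = (-a,a,√(1-2a²))`,
`b₂₂ = (a,a,√(1-2a²))`, `b₁₀ = α(b₀₀+b₂₀)`, `b₀₁ = α(b₀₀+b₀₂)`, `b₂₁ = α(b₂₀+b₂₂)`,
`b₁₂ = α(b₀₂+b₂₂)`, `b₁₁ = β(0,0,1)`. The first index is the `u`-index. -/
def ctrl (a α β : ℝ) : Fin 3 → Fin 3 → EuclideanSpace ℝ (Fin 3) :=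
  ![![v3 (-a) (-a) (Real.sqrt (1 - 2*a^2)),
     α • (v3 (-a) (-a) (Real.sqrt (1 - 2*a^2)) + v3 (-a) a (Real.sqrt (1 - 2*a^2))),
     v3 (-a) a (Real.sqrt (1 - 2*a^2))],
    ![α • (v3 (-a) (-a) (Real.sqrt (1 - 2*a^2)) + v3 a (-a) (Real.sqrt (1 - 2*a^2))),
     β • v3 0 0 1,
     α • (v3 (-a) a (Real.sqrt (1 - 2*a^2)) + v3 a a (Real.sqrt (1 - 2*a^2)))],
    ![v3 a (-a) (Real.sqrt (1 - 2*a^2)),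
     α • (v3 a (-a) (Real.sqrt (1 - 2*a^2)) + v3 a a (Real.sqrt (1 - 2*a^2))),
     v3 a a (Real.sqrt (1 - 2*a^2))]]

/-- The tensor product quadratic Bézier patch
`p(u,v) = ∑ᵢ ∑ⱼ Bᵢ²(u) Bⱼ²(v) bᵢⱼ`. -/
def bez (a α β u v : ℝ) : EuclideanSpace ℝ (Fin 3) :=
  ∑ i : Fin 3, ∑ j : Fin 3, (bern i u * bern j v) • ctrl a α β i j

/-- The simplified radial error `f(u,v,α,β) = ‖p(u,v)‖² - 1`. -/
def f (a α β u v : ℝ) : ℝ := ‖bez a α β u v‖ ^ 2 - 1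

/-- `f_s(u,α) = f(u,-1,α,β)`; this does not depend on `β` (the control point `b₁₁`
does not contribute on the side `v = -1`), so we take `β = 0`. -/
def fs (a α u : ℝ) : ℝ := f a α 0 u (-1)

/-- `f_d(u,α,β) = f(u,u,α,β)`, the error along the diagonal. -/
def fd (a α β u : ℝ) : ℝ := f a α β u u

lemma norm_sq3 (x : EuclideanSpace ℝ (Fin 3)) : ‖x‖^2 = (x 0)^2 + (x 1)^2 + (x 2)^2 := by
  rw [EuclideanSpace.norm_eq, Real.sq_sqrt (by positivity)]
  simp [Fin.sum_univ_three, sq_abs]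

set_option maxHeartbeats 1000000 in
lemma fs_eq (a α u c : ℝ) (hc : Real.sqrt (1 - 2*a^2) = c) :
    fs a α u = (a*u)^2 + (a*((1+u^2)/2 + α*(1-u^2)))^2 + (c*((1+u^2)/2 + α*(1-u^2)))^2 - 1 := by
  rw [fs, f, bez, norm_sq3]
  simp only [Fin.sum_univ_three, Finset.sum_apply, ctrl, hc, Matrix.cons_val', Matrix.cons_val_zero,
    Matrix.cons_val_one, Matrix.head_cons, Matrix.head_fin_const, Matrix.cons_val_fin_one,
    Matrix.empty_val', Matrix.cons_val_two, Matrix.tail_cons, PiLp.add_apply, PiLp.smul_apply,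
    smul_eq_mul, v3, PiLp.toLp_apply, bern, Fin.isValue, Fin.val_zero, Fin.val_one, Fin.val_two]
  norm_num
  ring

set_option maxHeartbeats 1000000 in
lemma fd_eq (a α β u c : ℝ) (hc : Real.sqrt (1 - 2*a^2) = c) :
    fd a α β u = 2*(a*u*((1+u^2)/2 + α*(1-u^2)))^2
      + (c*(((1+u^2)/2)^2 + 4*α*((1+u^2)/2)*((1-u^2)/2)) + β*((1-u^2)/2)^2)^2 - 1 := by
  rw [fd, f, bez, norm_sq3]
  simp only [Fin.sum_univ_three, Finset.sum_apply, ctrl, hc, Matrix.cons_val', Matrix.cons_val_zero,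
    Matrix.cons_val_one, Matrix.head_cons, Matrix.head_fin_const, Matrix.cons_val_fin_one,
    Matrix.empty_val', Matrix.cons_val_two, Matrix.tail_cons, PiLp.add_apply, PiLp.smul_apply,
    smul_eq_mul, v3, PiLp.toLp_apply, bern, Fin.isValue, Fin.val_zero, Fin.val_one, Fin.val_two]
  norm_num
  ring

lemma key1 (x e t : ℝ) (hx : 0 < x) (hx2 : x ≤ 1/2) (he : 0 ≤ e) (hex : e*(1-x) ≤ x)
    (ht : 0 < t) (ht2 : t < 1/2) :
    0 < (2*x + x^2*t*(1+2*t)) + (-2 + 2*x*(1-t)*(1+2*t) + x^2*t/2*(1+6*t))*e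
      + (t*(-(3-2*t)+x*(5-6*t)+x^2*t))*e^2 := by
  have h1x : 0 < 1 - x := by linarith
  have hd : 0 ≤ x - e*(1-x) := by linarith
  have hA : 0 < 2*x + x^2*t*(1+2*t) := by nlinarith [sq_nonneg x, mul_pos hx ht]
  have hU : 0 < x^3*t/2*(3-6*t+x) := by
    have h3 : (0:ℝ) < 3-6*t+x := by linarith
    nlinarith [mul_pos (mul_pos (pow_pos hx 3) ht) h3]
  have hbr : -(3-2*t)+x*(5-6*t)+x^2*t ≤ 0 := by
    nlinarith [mul_nonneg (by linarith : (0:ℝ) ≤ 1/2 - x) (by linarith : (0:ℝ) ≤ 5-6*t),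
      mul_nonneg (by nlinarith : (0:ℝ) ≤ 1/4 - x^2) ht.le]
  have hC2 : t*(-(3-2*t)+x*(5-6*t)+x^2*t) ≤ 0 := by
    nlinarith [mul_nonneg ht.le (neg_nonneg.2 hbr)]
  rcases he.eq_or_lt with rfl | hepos
  · nlinarith [hA]
  · have t1 : 0 ≤ (1-x)^2*(x-e*(1-x))*(2*x + x^2*t*(1+2*t)) :=
      mul_nonneg (mul_nonneg (sq_nonneg _) hd) hA.le
    have t2 : 0 < e*(1-x)*(x^3*t/2*(3-6*t+x)) := mul_pos (mul_pos hepos h1x) hU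
    have t3 : 0 ≤ (-(t*(-(3-2*t)+x*(5-6*t)+x^2*t)))*x*(1-x)*(e*(x-e*(1-x))) :=
      mul_nonneg (mul_nonneg (mul_nonneg (neg_nonneg.2 hC2) hx.le) h1x.le)
        (mul_nonneg hepos.le hd)
    have h5 : 0 < x*(1-x)^2*((2*x + x^2*t*(1+2*t)) + (-2 + 2*x*(1-t)*(1+2*t) + x^2*t/2*(1+6*t))*e
        + (t*(-(3-2*t)+x*(5-6*t)+x^2*t))*e^2) := by nlinarith [t1, t2, t3]
    have hxx : 0 < x*(1-x)^2 := mul_pos hx (pow_pos h1x 2)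
    by_contra hT
    push_neg at hT
    nlinarith [mul_nonneg hxx.le (neg_nonneg.2 hT)]

set_option maxHeartbeats 4000000 in
lemma main_ineq (a c k al b t : ℝ) (ha : 0 < a) (hc0 : 0 ≤ c) (hc2 : c^2 = 1 - 2*a^2)
    (hk0 : 0 < k) (hk2 : k^2 = 1 - a^2) (hal : 1/2 ≤ al) (hal2 : 2*al*(1-a^2) ≤ 1)
    (hb : 0 < b) (hbB : c*(1+4*al) + b ≤ k*(2+4*al)) (ht : 0 < t) (ht2 : t < 1/2) :
    0 < a^2*(1-2*t) + a^2*((1-t)+2*al*t)^2 + c^2*((1-t)+2*al*t)^2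
      - (2*a^2*(1-2*t)*((1-t)+2*al*t)^2 + (c*((1-t)^2+4*al*(1-t)*t) + b*t^2)^2) := by
  have ha2 : a^2 ≤ 1/2 := by nlinarith [sq_nonneg c]
  have hk1 : k ≤ 1 := by nlinarith [sq_nonneg a]
  have hc1 : c ≤ 1 := by nlinarith [sq_nonneg a, sq_nonneg c]
  have hpcK : (k-c)*(k+c) = a^2 := by linear_combination hk2 - hc2
  have hkpc : 0 < k + c := by linarith
  have hkc0 : 0 ≤ k - c := by nlinarith [hpcK, pow_pos ha 2]
  have hkc : a^2/2 ≤ k - c := by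
    nlinarith [mul_nonneg (by linarith : (0:ℝ) ≤ 2-(k+c)) hkc0]
  have hm2 : a^2*a^2/4 ≤ (k-c)^2 := by
    nlinarith [mul_le_mul hkc hkc (by positivity) hkc0]
  have hP2 : 0 ≤ 2*t*(1-2*t)*(1+2*al*(1+2*t)+8*al^2*t) := by
    have h9 : (0:ℝ) ≤ 1+2*al*(1+2*t)+8*al^2*t := by
      nlinarith [mul_nonneg (sq_nonneg al) ht.le, mul_pos (by linarith : (0:ℝ) < al) ht]
    exact mul_nonneg (mul_nonneg (by linarith) (by linarith)) h9
  have key := key1 (a^2) (2*al-1) t (pow_pos ha 2) ha2 (by linarith) (by linarith) ht ht2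
  have h7 := mul_pos (show (0:ℝ) < 1-2*t by linarith) key
  have h8 : 0 < (2 - 7*t - 4*al + 8*t^2 + 20*al*t - 4*t^3 - 32*al*t^2 - 12*al^2*t + 16*al*t^3
        + 32*al^2*t^2 - 16*al^2*t^3)
      + a^2*(3*t + 4*al - 8*t^2 - 24*al*t + 4*t^3 + 48*al*t^2 + 20*al^2*t - 32*al*t^3
        - 64*al^2*t^2 + 48*al^2*t^3)
      + (k-c)^2*(2*t*(1-2*t)*(1+2*al*(1+2*t)+8*al^2*t)) := by
    linarith [mul_nonneg (by nlinarith [hm2] : (0:ℝ) ≤ (k-c)^2 - a^2*a^2/4) hP2, h7]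
  have e1 : a^2*(1-2*t) + a^2*((1-t)+2*al*t)^2 + c^2*((1-t)+2*al*t)^2
      - (2*a^2*(1-2*t)*((1-t)+2*al*t)^2
        + (c*((1-t)^2+4*al*(1-t)*t) + (k*(2+4*al)-c*(1+4*al))*t^2)^2)
      = t*((2 - 7*t - 4*al + 8*t^2 + 20*al*t - 4*t^3 - 32*al*t^2 - 12*al^2*t + 16*al*t^3
        + 32*al^2*t^2 - 16*al^2*t^3)
      + a^2*(3*t + 4*al - 8*t^2 - 24*al*t + 4*t^3 + 48*al*t^2 + 20*al^2*t - 32*al*t^3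
        - 64*al^2*t^2 + 48*al^2*t^3)
      + (k-c)^2*(2*t*(1-2*t)*(1+2*al*(1+2*t)+8*al^2*t))) := by
    linear_combination (2*t - 5*t^2 - 4*al*t + 4*t^3 + 24*al*t^2 - 32*al*t^3 - 12*al^2*t^2
        + 16*al*t^4 + 48*al^2*t^3 - 32*al^2*t^4)*hc2
      + (-2*t^2 + 4*t^3 - 4*al*t^2 - 4*t^4 - 16*al^2*t^3 + 16*al^2*t^4)*hk2
  have hGB := mul_pos ht h8
  have hX : 0 ≤ (1-t)^2+4*al*(1-t)*t := by
    nlinarith [sq_nonneg (1-t),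
      mul_nonneg (mul_nonneg (by linarith : (0:ℝ) ≤ al) (by linarith : (0:ℝ) ≤ 1-t)) ht.le]
  have hz0 : 0 ≤ c*((1-t)^2+4*al*(1-t)*t) + b*t^2 := by
    nlinarith [mul_nonneg hc0 hX, mul_nonneg hb.le (sq_nonneg t)]
  have hzB : c*((1-t)^2+4*al*(1-t)*t) + b*t^2
      ≤ c*((1-t)^2+4*al*(1-t)*t) + (k*(2+4*al)-c*(1+4*al))*t^2 := by
    nlinarith [mul_nonneg (by linarith : (0:ℝ) ≤ k*(2+4*al) - c*(1+4*al) - b) (sq_nonneg t)]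
  have hzsq := pow_le_pow_left₀ hz0 hzB 2
  linarith [hGB, hzsq, e1]

set_option maxHeartbeats 4000000 in
/-- If `α ∈ [1/2, 1/(2(1-a²))]`, `β > 0` and `f_d(0,α,β) ≤ f_s(0,α)`, then
`f_d(u,α,β) < f_s(u,α)` for all `u ∈ (0,1)`. -/
theorem fs_gt_fd (a : ℝ) (ha : 0 < a) (ha' : a ≤ Real.sqrt 2 / 2)
    (α β : ℝ) (hα : α ∈ Set.Icc (1/2 : ℝ) (1/(2*(1 - a^2)))) (hβ : 0 < β)
    (h : fd a α β 0 ≤ fs a α 0) :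
    ∀ u ∈ Set.Ioo (0:ℝ) 1, fd a α β u < fs a α u := by
  obtain ⟨hal, halu⟩ := hα
  have hs2 : (Real.sqrt 2)^2 = 2 := Real.sq_sqrt (by norm_num)
  have ha2 : a^2 ≤ 1/2 := by
    have h0 : 0 ≤ Real.sqrt 2/2 - a := by linarith
    have h1 : 0 ≤ Real.sqrt 2/2 + a := by positivity
    nlinarith [mul_nonneg h0 h1, hs2]
  set c := Real.sqrt (1 - 2*a^2) with hcdef
  have hc0 : 0 ≤ c := Real.sqrt_nonneg _
  have hc2 : c^2 = 1 - 2*a^2 := Real.sq_sqrt (by linarith)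
  have h1a : 0 < 1 - a^2 := by linarith
  set k := Real.sqrt (1 - a^2) with hkdef
  have hk0 : 0 < k := Real.sqrt_pos.2 h1a
  have hk2 : k^2 = 1 - a^2 := Real.sq_sqrt h1a.le
  have hal2 : 2*α*(1-a^2) ≤ 1 := by
    rw [le_div_iff₀ (by positivity)] at halu
    linarith [halu]
  have e3 : fs a α 0 = (k*(1/2+α))^2 - 1 := by
    rw [fs_eq a α 0 c hcdef.symm]
    linear_combination ((1/2+α)^2)*hc2 - ((1/2+α)^2)*hk2
  have e4 : fd a α β 0 = (c*(1/4+α) + β*(1/4))^2 - 1 := by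
    rw [fd_eq a α β 0 c hcdef.symm]
    ring
  have hz0' : 0 ≤ c*(1/4+α) + β*(1/4) := by
    nlinarith [mul_nonneg hc0 (by linarith : (0:ℝ) ≤ 1/4+α)]
  have hkW : 0 < k*(1/2+α) := mul_pos hk0 (by linarith)
  have hz : (c*(1/4+α) + β*(1/4))^2 ≤ (k*(1/2+α))^2 := by linarith [h, e3, e4]
  have hsum : 0 < c*(1/4+α) + β*(1/4) + k*(1/2+α) := by linarith
  have hzz : c*(1/4+α) + β*(1/4) ≤ k*(1/2+α) := by nlinarith [hz, hsum]
  have hbB : c*(1+4*α) + β ≤ k*(2+4*α) := by linarith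
  intro u hu
  obtain ⟨hu0, hu1⟩ := hu
  have hu2 : u^2 < 1 := by nlinarith [mul_pos (by linarith : (0:ℝ) < 1-u) (by linarith : (0:ℝ) < 1+u)]
  have ht : 0 < (1-u^2)/2 := by linarith
  have ht2 : (1-u^2)/2 < 1/2 := by nlinarith [pow_pos hu0 2]
  have main := main_ineq a c k α β ((1-u^2)/2) ha hc0 hc2 hk0 hk2 hal hal2 hβ hbB ht ht2
  have e5 : fs a α u - fd a α β u
      = a^2*(1-2*((1-u^2)/2)) + a^2*((1-(1-u^2)/2)+2*α*((1-u^2)/2))^2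
        + c^2*((1-(1-u^2)/2)+2*α*((1-u^2)/2))^2
      - (2*a^2*(1-2*((1-u^2)/2))*((1-(1-u^2)/2)+2*α*((1-u^2)/2))^2
        + (c*((1-(1-u^2)/2)^2+4*α*(1-(1-u^2)/2)*((1-u^2)/2)) + β*((1-u^2)/2)^2)^2) := by
    rw [fs_eq a α u c hcdef.symm, fd_eq a α β u c hcdef.symm]
    ring
  linarith [main, e5]

end
end

section
/- For every α > 0, the quadratic function β ↦ f_d(0,α,β) − f_s(0,α) has exactly one positive zero, namely β₀(α) = 2(1+2α)√(1−a²) − (1+4α)√(1−2a²); that is, for β > 0 one has f_d(0,α,β) = f_s(0,α) if and only if β = β₀(α). -/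
noncomputable section

open Real Set

/-- `β₀(α) = 2(1+2α)√(1-a²) - (1+4α)√(1-2a²)`. -/
def β₀ (a α : ℝ) : ℝ := 2*(1 + 2*α)*Real.sqrt (1 - a^2) - (1 + 4*α)*Real.sqrt (1 - 2*a^2)

lemma norm_sq_e3 (x : EuclideanSpace ℝ (Fin 3)) :
    ‖x‖ ^ 2 = (x 0)^2 + (x 1)^2 + (x 2)^2 := by
  rw [EuclideanSpace.norm_eq, Real.sq_sqrt (by positivity)]
  simp [Fin.sum_univ_three, sq_abs]

lemma bez_diag (a α β : ℝ) :
    bez a α β 0 0 = v3 0 0 ((1+4*α)*Real.sqrt (1-2*a^2)/4 + β/4) := by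
  ext k
  simp only [bez, Fin.sum_univ_three, ctrl, bern, v3]
  fin_cases k <;>
    simp [PiLp.add_apply, PiLp.smul_apply, smul_eq_mul] <;> ring

lemma bez_side (a α : ℝ) : bez a α 0 0 (-1)
    = v3 0 (-(a/2)*(1+2*α)) (Real.sqrt (1-2*a^2)/2*(1+2*α)) := by
  ext k
  simp only [bez, Fin.sum_univ_three, ctrl, bern, v3]
  fin_cases k <;>
    simp [PiLp.add_apply, PiLp.smul_apply, smul_eq_mul] <;> ring

lemma v3_apply (x y z : ℝ) : v3 x y z 0 = x ∧ v3 x y z 1 = y ∧ v3 x y z 2 = z := by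
  refine ⟨rfl, rfl, rfl⟩

/-- For every `α > 0`, the function `β ↦ f_d(0,α,β) - f_s(0,α)` has exactly one positive
zero, namely `β₀(α)`: we have `β₀(α) > 0`, and for `β > 0`,
`f_d(0,α,β) = f_s(0,α)` iff `β = β₀(α)`. -/
theorem beta0_unique_positive_zero (a : ℝ) (ha : 0 < a) (ha' : a ≤ Real.sqrt 2 / 2)
    (α : ℝ) (hα : 0 < α) :
    0 < β₀ a α ∧ ∀ β : ℝ, 0 < β → (fd a α β 0 - fs a α 0 = 0 ↔ β = β₀ a α) := by
  have ha2 : 2 * a ^ 2 ≤ 1 := by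
    have h2 : (Real.sqrt 2 / 2) ^ 2 = 1 / 2 := by
      rw [div_pow, Real.sq_sqrt (by norm_num : (2:ℝ) ≥ 0)]; norm_num
    nlinarith [pow_le_pow_left₀ ha.le ha' 2]
  set c := Real.sqrt (1 - 2*a^2) with hcdef
  set s := Real.sqrt (1 - a^2) with hsdef
  have hc0 : 0 ≤ c := Real.sqrt_nonneg _
  have hc2 : c ^ 2 = 1 - 2*a^2 := Real.sq_sqrt (by linarith)
  have hs2 : s ^ 2 = 1 - a^2 := Real.sq_sqrt (by nlinarith)
  have hs0 : 0 < s := Real.sqrt_pos.mpr (by nlinarith)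
  have hcs : c ≤ s := Real.sqrt_le_sqrt (by nlinarith)
  have hβ₀ : β₀ a α = 2*(1+2*α)*s - (1+4*α)*c := rfl
  have hpos : 0 < β₀ a α := by rw [hβ₀]; nlinarith
  refine ⟨hpos, fun β hβ => ?_⟩
  have hfd : fd a α β 0 = ((1+4*α)*c/4 + β/4)^2 - 1 := by
    rw [fd, f, bez_diag, norm_sq_e3]
    simp only [v3, PiLp.toLp_apply, Matrix.cons_val_zero, Matrix.cons_val_one, Matrix.head_cons,
      Matrix.cons_val_two, Matrix.tail_cons]
    ring
  have hfs : fs a α 0 = ((-(a/2)*(1+2*α))^2 + (c/2*(1+2*α))^2) - 1 := by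
    rw [fs, f, bez_side, norm_sq_e3]
    simp only [v3, PiLp.toLp_apply, Matrix.cons_val_zero, Matrix.cons_val_one, Matrix.head_cons,
      Matrix.cons_val_two, Matrix.tail_cons]
    ring
  rw [hfd, hfs, hβ₀]
  constructor
  · intro h
    have key : (β + (1+4*α)*c - 2*(1+2*α)*s) * (β + (1+4*α)*c + 2*(1+2*α)*s) = 0 := by
      linear_combination 16*h + 4*(1+2*α)^2*hc2 - 4*(1+2*α)^2*hs2
    rcases mul_eq_zero.mp key with h1 | h2
    · linarith
    · nlinarith
  · intro h
    subst h
    linear_combination ((1+2*α)^2/4) * hs2 - ((1+2*α)^2/4) * hc2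

end
end

section
/- Let α > 0 satisfy f_s(0,α) ≥ 0 and let F(u,α) = f_d(u,α,β₀(α)) (so that F(0,α) = f_s(0,α)). Then the derivative with respect to α satisfies (d/dα) F(0,α) ≥ (d/dα) F(u,α) for all u ∈ [−1,1]. -/
noncomputable section

open Real Set

lemma norm_sq_v3 (x : EuclideanSpace ℝ (Fin 3)) : ‖x‖^2 = x 0^2 + x 1^2 + x 2^2 := by
  rw [EuclideanSpace.norm_eq, Real.sq_sqrt (by positivity)]
  simp [Fin.sum_univ_three, sq_abs]

lemma bern0' (u : ℝ) : bern 0 u = ((1-u)/2)^2 := by simp [bern]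
lemma bern1' (u : ℝ) : bern 1 u = 2*((1+u)/2)*((1-u)/2) := by simp [bern]
lemma bern2' (u : ℝ) : bern 2 u = ((1+u)/2)^2 := by simp [bern]

lemma v3_0 (x y z : ℝ) : v3 x y z 0 = x := rfl
lemma v3_1 (x y z : ℝ) : v3 x y z 1 = y := rfl
lemma v3_2 (x y z : ℝ) : v3 x y z 2 = z := rfl

lemma bez_apply (a α β u v : ℝ) (k : Fin 3) :
    bez a α β u v k =
      bern 0 u * bern 0 v * (v3 (-a) (-a) (Real.sqrt (1 - 2*a^2)) k)
      + bern 0 u * bern 1 v * (α * ((v3 (-a) (-a) (Real.sqrt (1 - 2*a^2)) k) + (v3 (-a) a (Real.sqrt (1 - 2*a^2)) k)))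
      + bern 0 u * bern 2 v * (v3 (-a) a (Real.sqrt (1 - 2*a^2)) k)
      + bern 1 u * bern 0 v * (α * ((v3 (-a) (-a) (Real.sqrt (1 - 2*a^2)) k) + (v3 a (-a) (Real.sqrt (1 - 2*a^2)) k)))
      + bern 1 u * bern 1 v * (β * (v3 0 0 1 k))
      + bern 1 u * bern 2 v * (α * ((v3 (-a) a (Real.sqrt (1 - 2*a^2)) k) + (v3 a a (Real.sqrt (1 - 2*a^2)) k)))
      + bern 2 u * bern 0 v * (v3 a (-a) (Real.sqrt (1 - 2*a^2)) k)
      + bern 2 u * bern 1 v * (α * ((v3 a (-a) (Real.sqrt (1 - 2*a^2)) k) + (v3 a a (Real.sqrt (1 - 2*a^2)) k)))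
      + bern 2 u * bern 2 v * (v3 a a (Real.sqrt (1 - 2*a^2)) k) := by
  simp only [bez, Finset.sum_apply, Fin.sum_univ_three, ctrl, Matrix.cons_val_zero,
    Matrix.cons_val_one, Matrix.head_cons, Matrix.cons_val_two, Matrix.tail_cons,
    PiLp.smul_apply, PiLp.add_apply, smul_eq_mul]
  ring

/-- coefficient of `t^2` in `fd a t (β₀ a t) u` (with `s = √(1-a²)`, `c = √(1-2a²)`). -/
def Ac (a s c u : ℝ) : ℝ :=
  8*a^2*u^2*((1-u^2)/2)^2
    + (4*c*((1+u^2)/2)*((1-u^2)/2) + 4*(s-c)*((1-u^2)/2)^2)^2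

/-- coefficient of `t` in `fd a t (β₀ a t) u`. -/
def Bc (a s c u : ℝ) : ℝ :=
  8*a^2*u^2*((1+u^2)/2)*((1-u^2)/2)
    + 2*(c*((1+u^2)/2)^2 + (2*s-c)*((1-u^2)/2)^2)
      * (4*c*((1+u^2)/2)*((1-u^2)/2) + 4*(s-c)*((1-u^2)/2)^2)

/-- constant coefficient in `fd a t (β₀ a t) u`. -/
def Cc (a s c u : ℝ) : ℝ :=
  2*a^2*u^2*((1+u^2)/2)^2
    + (c*((1+u^2)/2)^2 + (2*s-c)*((1-u^2)/2)^2)^2 - 1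

lemma fd_eq_s6 (a t u : ℝ) :
    fd a t (β₀ a t) u =
      Ac a (Real.sqrt (1-a^2)) (Real.sqrt (1-2*a^2)) u * t^2
      + Bc a (Real.sqrt (1-a^2)) (Real.sqrt (1-2*a^2)) u * t
      + Cc a (Real.sqrt (1-a^2)) (Real.sqrt (1-2*a^2)) u := by
  rw [fd, f, norm_sq_v3, bez_apply, bez_apply, bez_apply]
  simp only [v3_0, v3_1, v3_2, bern0', bern1', bern2', β₀, Ac, Bc, Cc]
  ring

lemma deriv_fd (a u α : ℝ) :
    deriv (fun t => fd a t (β₀ a t) u) α =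
      2 * Ac a (Real.sqrt (1-a^2)) (Real.sqrt (1-2*a^2)) u * α
      + Bc a (Real.sqrt (1-a^2)) (Real.sqrt (1-2*a^2)) u := by
  set A := Ac a (Real.sqrt (1-a^2)) (Real.sqrt (1-2*a^2)) u
  set B := Bc a (Real.sqrt (1-a^2)) (Real.sqrt (1-2*a^2)) u
  set C := Cc a (Real.sqrt (1-a^2)) (Real.sqrt (1-2*a^2)) u
  have hfun : (fun t => fd a t (β₀ a t) u) = fun t => A * t^2 + B * t + C :=
    funext fun t => fd_eq_s6 a t u
  rw [hfun]
  have h : HasDerivAt (fun t : ℝ => A * t^2 + B * t + C) (2*A*α + B) α := by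
    have h1 := (((hasDerivAt_pow 2 α).const_mul A).add
      ((hasDerivAt_id α).const_mul B)).add_const C
    refine HasDerivAt.congr_deriv h1 ?_
    push_cast
    ring
  exact h.deriv

set_option maxHeartbeats 1000000 in
/-- Let `α > 0` with `f_s(0,α) ≥ 0`, and let `F(u,α) = f_d(u,α,β₀(α))`. Then
`(d/dα) F(0,α) ≥ (d/dα) F(u,α)` for all `u ∈ [-1,1]`. -/
theorem speedincreasing (a : ℝ) (ha : 0 < a) (ha' : a ≤ Real.sqrt 2 / 2)
    (α : ℝ) (hα : 0 < α) (h0 : 0 ≤ fs a α 0) :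
    ∀ u ∈ Set.Icc (-1:ℝ) 1,
      deriv (fun t => fd a t (β₀ a t) u) α ≤ deriv (fun t => fd a t (β₀ a t) 0) α := by
  intro u hu
  obtain ⟨hu1, hu2⟩ := hu
  set s := Real.sqrt (1-a^2) with hs_def
  set c := Real.sqrt (1-2*a^2) with hc_def
  have h2 : (Real.sqrt 2 / 2)^2 = (1:ℝ)/2 := by
    rw [div_pow, Real.sq_sqrt (by norm_num : (0:ℝ) ≤ 2)]; norm_num
  have ht : a^2 ≤ 1/2 := by
    have := pow_le_pow_left₀ ha.le ha' 2
    rwa [h2] at this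
  have hs2 : s^2 = 1 - a^2 := Real.sq_sqrt (by nlinarith)
  have hc2 : c^2 = 1 - 2*a^2 := Real.sq_sqrt (by nlinarith)
  have hs0 : 0 ≤ s := Real.sqrt_nonneg _
  have hc0 : 0 ≤ c := Real.sqrt_nonneg _
  have hs1 : s ≤ 1 := by nlinarith [sq_nonneg a, sq_nonneg (s-1)]
  -- the side condition gives `2 ≤ s*(1+2α)`
  have fs_eq : fs a α 0 = (1+2*α)^2*(a^2+c^2)/4 - 1 := by
    rw [fs, f, norm_sq_v3, bez_apply, bez_apply, bez_apply]
    simp only [v3_0, v3_1, v3_2, bern0', bern1', bern2']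
    ring
  have hkey : 2 ≤ s*(1+2*α) := by
    rw [fs_eq] at h0
    nlinarith [mul_nonneg hs0 (by linarith : (0:ℝ) ≤ 1+2*α), hs2, hc2]
  have hα2 : 1/2 ≤ α := by nlinarith
  -- `0 ≤ 2 - 3a² - 2sc`
  have hsc2 : (s*c)^2 = (1-a^2)*(1-2*a^2) := by rw [mul_pow, hs2, hc2]
  have hid : (2-3*a^2)^2 - (2*s*c)^2 = a^4 := by linear_combination (-4)*hsc2
  have hpos : 0 < 2-3*a^2+2*s*c := by nlinarith [mul_nonneg hs0 hc0]
  have hr : 0 ≤ 2 - 3*a^2 - 2*s*c := by nlinarith [hid, hpos, sq_nonneg (a^2)]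
  have hw1 : u^2 ≤ 1 := by nlinarith
  rw [deriv_fd, deriv_fd, ← hs_def, ← hc_def]
  -- the key algebraic identity
  have key : 2 * Ac a s c 0 * α + Bc a s c 0 - (2 * Ac a s c u * α + Bc a s c u)
      = u^2 * ((2-3*a^2-2*s*c)*(1-u^2)^2*(4-3*u^2))
      + u^2 * (u^2*((1/2-a^2)*(1+2*u^2-u^4) + ((1-u^2)^2+2)/2))
      + u^2 * ((α-1/2)*(4*(2-3*a^2-2*s*c)*(1-u^2)^3))
      + u^2 * ((α-1/2)*(2*u^2*((2-u^2)^2/2 + (1/2-a^2)*u^2*(4-3*u^2)))) := by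
    simp only [Ac, Bc]
    linear_combination (4*u^2 + 8*u^2*α - 6*u^4 - 12*u^4*α + 4*u^6 + 8*u^6*α
        - u^8 - 2*u^8*α) * hs2
      + (-4*u^4 - 8*u^4*α + 4*u^6 + 16*u^6*α - 8*u^8*α) * hc2
  have h43 : (0:ℝ) ≤ 4 - 3*u^2 := by nlinarith
  have hT1 : 0 ≤ u^2 * ((2-3*a^2-2*s*c)*(1-u^2)^2*(4-3*u^2)) :=
    mul_nonneg (sq_nonneg u) (mul_nonneg (mul_nonneg hr (sq_nonneg _)) h43)
  have hT2 : 0 ≤ u^2 * (u^2*((1/2-a^2)*(1+2*u^2-u^4) + ((1-u^2)^2+2)/2)) := by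
    have hin : (0:ℝ) ≤ (1/2-a^2)*(1+2*u^2-u^4) + ((1-u^2)^2+2)/2 := by
      have : (0:ℝ) ≤ (1/2-a^2)*(1+2*u^2-u^4) :=
        mul_nonneg (by linarith) (by nlinarith [sq_nonneg u])
      nlinarith [sq_nonneg (1-u^2)]
    exact mul_nonneg (sq_nonneg u) (mul_nonneg (sq_nonneg u) hin)
  have hT3 : 0 ≤ u^2 * ((α-1/2)*(4*(2-3*a^2-2*s*c)*(1-u^2)^3)) := by
    have h3 : (0:ℝ) ≤ (1-u^2)^3 := pow_nonneg (by linarith) 3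
    exact mul_nonneg (sq_nonneg u) (mul_nonneg (by linarith)
      (mul_nonneg (by linarith [hr]) h3))
  have hT4 : 0 ≤ u^2 * ((α-1/2)*(2*u^2*((2-u^2)^2/2 + (1/2-a^2)*u^2*(4-3*u^2)))) := by
    have hX : (0:ℝ) ≤ (2-u^2)^2/2 + (1/2-a^2)*u^2*(4-3*u^2) := by
      have : (0:ℝ) ≤ (1/2-a^2)*u^2*(4-3*u^2) :=
        mul_nonneg (mul_nonneg (by linarith) (sq_nonneg u)) h43
      nlinarith [sq_nonneg (2-u^2)]
    have h5 : (0:ℝ) ≤ u^2 * ((2-u^2)^2/2 + (1/2-a^2)*u^2*(4-3*u^2)) :=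
      mul_nonneg (sq_nonneg u) hX
    exact mul_nonneg (sq_nonneg u) (mul_nonneg (by linarith) (by linarith))
  linarith [key, hT1, hT2, hT3, hT4]


end
end

section
/- Let a = √3/3, α = 3/4 and β = 7√3/6 (the unique G¹ spline patch parameters). Then ‖p(0,0)‖ = 5√3/8, and for all (u,v) ∈ [−1,1]² one has 1 ≤ ‖p(u,v)‖ ≤ 5√3/8; consequently the radial error satisfies max_{(u,v)∈[−1,1]²} |‖p(u,v)‖ − 1| = (5√3 − 8)/8 and the whole patch lies outside the unit sphere. -/
noncomputable section

open Real Set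

lemma gpoly_le (P Q : ℝ) (hP0 : 0 ≤ P) (hP1 : P ≤ 1) (hQ0 : 0 ≤ Q) (hQ1 : Q ≤ 1) :
    4*P*(5-Q)^2+4*Q*(5-P)^2+(15-5*P-5*Q+3*P*Q)^2 ≤ 225 := by
  nlinarith [mul_nonneg hP0 hQ0, mul_nonneg (mul_nonneg hP0 hQ0) hP0,
    mul_nonneg (mul_nonneg hP0 hQ0) hQ0, sq_nonneg (P-Q), sq_nonneg (P*Q),
    mul_nonneg (sub_nonneg.2 hP1) (sub_nonneg.2 hQ1),
    mul_nonneg (mul_nonneg hP0 hQ0) (mul_nonneg (sub_nonneg.2 hP1) (sub_nonneg.2 hQ1))]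

lemma gpoly_ge (P Q : ℝ) (hP0 : 0 ≤ P) (hP1 : P ≤ 1) (hQ0 : 0 ≤ Q) (hQ1 : Q ≤ 1) :
    192 ≤ 4*P*(5-Q)^2+4*Q*(5-P)^2+(15-5*P-5*Q+3*P*Q)^2 := by
  nlinarith [sq_nonneg (P+Q-2), sq_nonneg (P-Q), mul_nonneg hP0 hQ0,
    mul_nonneg (sub_nonneg.2 hP1) (sub_nonneg.2 hQ1), sq_nonneg (P*Q-1),
    mul_nonneg (mul_nonneg (sub_nonneg.2 hP1) (sub_nonneg.2 hQ1)) (mul_nonneg hP0 hQ0),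
    sq_nonneg (P+Q-P*Q-1)]

lemma bez_norm_sq (u v : ℝ) :
    ‖bez (Real.sqrt 3/3) (3/4) (7*Real.sqrt 3/6) u v‖^2 =
    (4*u^2*(5-v^2)^2 + 4*v^2*(5-u^2)^2 + (15-5*u^2-5*v^2+3*u^2*v^2)^2)/192 := by
  set s := Real.sqrt 3 with hsdef
  have hs : s^2 = 3 := Real.sq_sqrt (by norm_num)
  have hs0 : 0 ≤ s := Real.sqrt_nonneg 3
  have hσ : Real.sqrt (1 - 2*(s/3)^2) = s/3 := by
    rw [show (1:ℝ) - 2*(s/3)^2 = (s/3)^2 by nlinarith]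
    exact Real.sqrt_sq (by positivity)
  rw [EuclideanSpace.norm_eq]
  rw [Real.sq_sqrt (by positivity)]
  simp only [bez, ctrl, bern, v3, hσ, Fin.sum_univ_three, Fin.isValue,
    Matrix.cons_val_zero, Matrix.cons_val_one, Matrix.head_cons, Matrix.cons_val_two,
    Matrix.tail_cons, PiLp.add_apply, PiLp.smul_apply, Finset.sum_apply,
    smul_eq_mul, Real.norm_eq_abs, sq_abs, Fin.val_zero, Fin.val_one, Fin.val_two]
  norm_num [Nat.choose]
  linear_combination ((u*(5-v^2)/4)^2 + (v*(5-u^2)/4)^2 + ((15-5*u^2-5*v^2+3*u^2*v^2)/8)^2)/9 * hs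

/-- For the unique `G¹` spline patch parameters `a = √3/3`, `α = 3/4`, `β = 7√3/6`:
`‖p(0,0)‖ = 5√3/8`, for all `(u,v) ∈ [-1,1]²` one has `1 ≤ ‖p(u,v)‖ ≤ 5√3/8`, and
consequently the radial error is `max |‖p(u,v)‖ - 1| = (5√3 - 8)/8` (the whole patch
lies outside the unit sphere). -/
theorem G1_patch_radial_error (a α β : ℝ) (haa : a = Real.sqrt 3 / 3)
    (hαα : α = 3/4) (hββ : β = 7*Real.sqrt 3/6) :
    ‖bez a α β 0 0‖ = 5*Real.sqrt 3/8 ∧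
    (∀ u ∈ Set.Icc (-1:ℝ) 1, ∀ v ∈ Set.Icc (-1:ℝ) 1,
      1 ≤ ‖bez a α β u v‖ ∧ ‖bez a α β u v‖ ≤ 5*Real.sqrt 3/8) ∧
    sSup ((fun q : ℝ × ℝ => |‖bez a α β q.1 q.2‖ - 1|) ''
        (Set.Icc (-1:ℝ) 1 ×ˢ Set.Icc (-1:ℝ) 1)) = (5*Real.sqrt 3 - 8)/8 := by
  subst haa hαα hββ
  have hs : Real.sqrt 3 ^ 2 = 3 := Real.sq_sqrt (by norm_num)
  have hs0 : 0 ≤ Real.sqrt 3 := Real.sqrt_nonneg 3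
  have hs1 : (1:ℝ) ≤ Real.sqrt 3 := by nlinarith
  have hval : (5*Real.sqrt 3/8)^2 = 75/64 := by
    linear_combination (25/64) * hs
  -- value at the center
  have h00 : ‖bez (Real.sqrt 3/3) (3/4) (7*Real.sqrt 3/6) 0 0‖ = 5*Real.sqrt 3/8 := by
    have h2 : ‖bez (Real.sqrt 3/3) (3/4) (7*Real.sqrt 3/6) 0 0‖^2 = (5*Real.sqrt 3/8)^2 := by
      rw [bez_norm_sq, hval]; norm_num
    calc ‖bez (Real.sqrt 3/3) (3/4) (7*Real.sqrt 3/6) 0 0‖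
        = Real.sqrt (‖bez (Real.sqrt 3/3) (3/4) (7*Real.sqrt 3/6) 0 0‖^2) :=
          (Real.sqrt_sq (norm_nonneg _)).symm
      _ = Real.sqrt ((5*Real.sqrt 3/8)^2) := by rw [h2]
      _ = 5*Real.sqrt 3/8 := Real.sqrt_sq (by positivity)
  -- bounds
  have hb : ∀ u ∈ Set.Icc (-1:ℝ) 1, ∀ v ∈ Set.Icc (-1:ℝ) 1,
      1 ≤ ‖bez (Real.sqrt 3/3) (3/4) (7*Real.sqrt 3/6) u v‖ ∧
      ‖bez (Real.sqrt 3/3) (3/4) (7*Real.sqrt 3/6) u v‖ ≤ 5*Real.sqrt 3/8 := by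
    intro u hu v hv
    have hP0 : 0 ≤ u^2 := sq_nonneg u
    have hQ0 : 0 ≤ v^2 := sq_nonneg v
    have hP1 : u^2 ≤ 1 := by nlinarith [hu.1, hu.2]
    have hQ1 : v^2 ≤ 1 := by nlinarith [hv.1, hv.2]
    have hq := bez_norm_sq u v
    have hle := gpoly_le (u^2) (v^2) hP0 hP1 hQ0 hQ1
    have hge := gpoly_ge (u^2) (v^2) hP0 hP1 hQ0 hQ1
    have h1 : 1 ≤ ‖bez (Real.sqrt 3/3) (3/4) (7*Real.sqrt 3/6) u v‖^2 := by
      rw [hq]; linarith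
    have h2 : ‖bez (Real.sqrt 3/3) (3/4) (7*Real.sqrt 3/6) u v‖^2 ≤ (5*Real.sqrt 3/8)^2 := by
      rw [hq, hval]; linarith
    have hn := norm_nonneg (bez (Real.sqrt 3/3) (3/4) (7*Real.sqrt 3/6) u v)
    constructor
    · nlinarith
    · nlinarith [mul_pos (show (0:ℝ) < 5*Real.sqrt 3/8 by positivity)
        (show (0:ℝ) < 5*Real.sqrt 3/8 by positivity)]
  refine ⟨h00, hb, ?_⟩
  apply IsGreatest.csSup_eq
  constructor
  · exact ⟨(0, 0), by constructor <;> norm_num, by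
      simp only [h00]
      rw [abs_of_nonneg (by nlinarith)]
      ring⟩
  · rintro x ⟨⟨u, v⟩, ⟨hu, hv⟩, rfl⟩
    obtain ⟨h1, h2⟩ := hb u hu v hv
    simp only
    rw [abs_of_nonneg (by linarith)]
    linarith


end
end
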